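/- For any odd integer q ≥ 3, coprime integer p with 2 ≤ p < q, and integers j ≠ k with 1 ≤ j, k ≤ (q-1)/2, the sum Σ_{i=1}^{(q-1)/2} sin((2i-1)(2j-1)pπ/q)·sin((2i-1)(2k-1)pπ/q) equals 0. -/

import Mathlib

open Real Finset

lemma sumA (θ : ℝ) (m : ℕ) :
    ∑ i ∈ Icc 1 m, 2 * Real.sin θ * Real.cos ((2 * (i:ℝ) - 1) * θ) = Real.sin (2 * m * θ) := by
  induction m with
  | zero => simp
  | succ n ih =>
    rw [Finset.sum_Icc_succ_top (by omega), ih]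
    push_cast
    rw [show (2*((n:ℝ)+1)-1) = 2*n+1 by ring,
        show (2*((n:ℝ)+1))*θ = (2*n+1)*θ+θ by ring,
        show 2*(n:ℝ)*θ = (2*n+1)*θ-θ by ring,
        Real.sin_add, Real.sin_sub]
    ring

lemma key (p q n : ℕ) (hq3 : 3 ≤ q) (hqo : Odd q) (hcop : Nat.Coprime p q)
    (hp : 1 ≤ p) (hn1 : 1 ≤ n) (hn2 : n < q) :
    ∑ i ∈ Icc 1 ((q - 1) / 2),
      Real.cos ((2 * (i:ℝ) - 1) * ((2 * n * p * Real.pi) / q)) = -(1/2) := by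
  set θ : ℝ := (2 * n * p * Real.pi) / q with hθ
  obtain ⟨m, hm⟩ := hqo
  have hm' : (q - 1) / 2 = m := by omega
  have hqR : (q : ℝ) = 2 * m + 1 := by push_cast [hm]; ring
  have hq0 : (q : ℝ) ≠ 0 := by positivity
  -- sin θ ≠ 0
  have hs : Real.sin θ ≠ 0 := by
    intro h
    obtain ⟨t, ht⟩ := Real.sin_eq_zero_iff.mp h
    have hπ : Real.pi ≠ 0 := Real.pi_ne_zero
    have h1 : (t : ℝ) * q = 2 * n * p := by
      rw [hθ] at ht; field_simp at ht
      exact ht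
    have h2 : t * q = 2 * n * p := by exact_mod_cast h1
    have hdvd : (q : ℤ) ∣ 2 * n * p := ⟨t, by linarith [h2]⟩
    have hdvdN : q ∣ 2 * n * p := by exact_mod_cast hdvd
    have hc2 : Nat.Coprime q 2 := Odd.coprime_two_right ⟨m, hm⟩
    have hcp : Nat.Coprime q p := hcop.symm
    have : q ∣ n := by
      have h3 : q ∣ 2 * n := (Nat.Coprime.dvd_of_dvd_mul_right hcp) hdvdN
      exact (Nat.Coprime.dvd_of_dvd_mul_left hc2) h3
    have := Nat.le_of_dvd (by omega) this
    omega
  -- sin (2 m θ) = - sin θ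
  have h2m : Real.sin (2 * m * θ) = - Real.sin θ := by
    have : 2 * (m:ℝ) * θ = (↑(n * p) : ℝ) * (2 * Real.pi) - θ := by
      push_cast
      rw [hθ]; field_simp; rw [hqR]
      ring
    rw [this, Real.sin_nat_mul_two_pi_sub]
  have hA := sumA θ m
  rw [hm']
  rw [← Finset.mul_sum] at hA
  rw [h2m] at hA
  have h2s : (2 : ℝ) * Real.sin θ ≠ 0 := by
    simp [hs]
  have h0 : Real.sin θ * (2 * (∑ i ∈ Icc 1 m, Real.cos ((2 * (i:ℝ) - 1) * θ)) + 1) = 0 := by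
    linear_combination hA
  rcases mul_eq_zero.mp h0 with h | h
  · exact absurd h hs
  · linarith
theorem stmt_8 (p q j k : ℕ) (hq3 : 3 ≤ q) (hqo : Odd q) (hcop : Nat.Coprime p q)
    (hp : 2 ≤ p) (hpq : p < q)
    (hj1 : 1 ≤ j) (hj2 : j ≤ (q - 1) / 2) (hk1 : 1 ≤ k) (hk2 : k ≤ (q - 1) / 2)
    (hjk : j ≠ k) :
    ∑ i ∈ Finset.Icc 1 ((q - 1) / 2),
      Real.sin ((2 * (i : ℝ) - 1) * (2 * (j : ℝ) - 1) * p * Real.pi / q) *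
      Real.sin ((2 * (i : ℝ) - 1) * (2 * (k : ℝ) - 1) * p * Real.pi / q) = 0 := by
  wlog h : k < j with H
  · have hkj : j < k := by omega
    have hsym := H p q k j hq3 hqo hcop hp hpq hk1 hk2 hj1 hj2 hjk.symm hkj
    calc ∑ i ∈ Finset.Icc 1 ((q - 1) / 2),
          Real.sin ((2 * (i : ℝ) - 1) * (2 * (j : ℝ) - 1) * p * Real.pi / q) *
          Real.sin ((2 * (i : ℝ) - 1) * (2 * (k : ℝ) - 1) * p * Real.pi / q)
        = ∑ i ∈ Finset.Icc 1 ((q - 1) / 2),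
          Real.sin ((2 * (i : ℝ) - 1) * (2 * (k : ℝ) - 1) * p * Real.pi / q) *
          Real.sin ((2 * (i : ℝ) - 1) * (2 * (j : ℝ) - 1) * p * Real.pi / q) :=
          Finset.sum_congr rfl fun i _ => mul_comm _ _
      _ = 0 := hsym
  obtain ⟨t, ht⟩ := hqo
  have hp1 : 1 ≤ p := by omega
  have hd1 : 1 ≤ j - k := by omega
  have hd2 : j - k < q := by omega
  have he1 : 1 ≤ j + k - 1 := by omega
  have he2 : j + k - 1 < q := by omega
  have hcast1 : ((j - k : ℕ) : ℝ) = (j : ℝ) - (k : ℝ) := by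
    rw [Nat.cast_sub h.le]
  have hcast2 : ((j + k - 1 : ℕ) : ℝ) = (j : ℝ) + (k : ℝ) - 1 := by
    rw [Nat.cast_sub (by omega)]
    push_cast
    ring
  have key1 := key p q (j - k) hq3 ⟨t, ht⟩ hcop hp1 hd1 hd2
  have key2 := key p q (j + k - 1) hq3 ⟨t, ht⟩ hcop hp1 he1 he2
  calc ∑ i ∈ Finset.Icc 1 ((q - 1) / 2),
        Real.sin ((2 * (i : ℝ) - 1) * (2 * (j : ℝ) - 1) * p * Real.pi / q) *
        Real.sin ((2 * (i : ℝ) - 1) * (2 * (k : ℝ) - 1) * p * Real.pi / q)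
      = ∑ i ∈ Finset.Icc 1 ((q - 1) / 2),
        (Real.cos ((2 * (i:ℝ) - 1) * ((2 * (j - k : ℕ) * p * Real.pi) / q)) -
         Real.cos ((2 * (i:ℝ) - 1) * ((2 * (j + k - 1 : ℕ) * p * Real.pi) / q))) / 2 := by
        refine Finset.sum_congr rfl fun i _ => ?_
        rw [hcast1, hcast2]
        rw [show (2 * (i:ℝ) - 1) * ((2 * ((j:ℝ) - k) * p * Real.pi) / q)
              = (2 * (i : ℝ) - 1) * (2 * (j : ℝ) - 1) * p * Real.pi / q
                - (2 * (i : ℝ) - 1) * (2 * (k : ℝ) - 1) * p * Real.pi / q by ring,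
            show (2 * (i:ℝ) - 1) * ((2 * ((j:ℝ) + k - 1) * p * Real.pi) / q)
              = (2 * (i : ℝ) - 1) * (2 * (j : ℝ) - 1) * p * Real.pi / q
                + (2 * (i : ℝ) - 1) * (2 * (k : ℝ) - 1) * p * Real.pi / q by ring,
            Real.cos_sub, Real.cos_add]
        ring
    _ = ((∑ i ∈ Finset.Icc 1 ((q - 1) / 2),
          Real.cos ((2 * (i:ℝ) - 1) * ((2 * (j - k : ℕ) * p * Real.pi) / q))) -
         (∑ i ∈ Finset.Icc 1 ((q - 1) / 2),
          Real.cos ((2 * (i:ℝ) - 1) * ((2 * (j + k - 1 : ℕ) * p * Real.pi) / q)))) / 2 := by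
        rw [← Finset.sum_sub_distrib, Finset.sum_div]
    _ = 0 := by rw [key1, key2]; ring
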